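/- Let p, q ≥ 1 and work in R = ℚ[y₁,…,y_p, z₁,…,z_q]. Let I be the ideal generated by the elementary symmetric polynomials e₁,…,e_{p+q} of the full variable set {y₁,…,y_p, z₁,…,z_q}. If (p,q) ≠ (1,1), then the polynomial q·(y₁²+⋯+y_p²) + p·(z₁²+⋯+z_q²) − 2·(y₁+⋯+y_p)(z₁+⋯+z_q) does not belong to I; whereas for p = q = 1 the polynomial y² + z² − 2yz does belong to I. -/

import Mathlib

open MvPolynomial Finset

/-- Newton's identity in degree 2: `2·e₂ = e₁² − p₂`. -/
lemma two_mul_esymm_two {σ : Type*} [Fintype σ] [DecidableEq σ] :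
    2 * esymm σ ℚ 2 = (esymm σ ℚ 1) ^ 2 - psum σ ℚ 2 := by
  have h := MvPolynomial.mul_esymm_eq_sum σ ℚ 2
  simp [Finset.Nat.sum_antidiagonal_eq_sum_range_succ_mk, Finset.sum_filter,
    Finset.sum_range_succ, psum_one, esymm_zero, MvPolynomial.psum] at h ⊢
  ring_nf at h ⊢
  exact h

/-- A primitive cube root of unity in `ℂ`. -/
noncomputable def omC : ℂ := (-1 + (Real.sqrt 3 : ℝ) * Complex.I) / 2

lemma omC_rel : omC ^ 2 + omC + 1 = 0 := by
  have hs : ((Real.sqrt 3 : ℝ) : ℂ) ^ 2 = 3 := by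
    norm_cast
    rw [Real.sq_sqrt] <;> norm_num
  have hI : (Complex.I) ^ 2 = -1 := Complex.I_sq
  unfold omC
  field_simp
  linear_combination (3 : ℂ) * hI + Complex.I ^ 2 * hs

lemma sum_if_single' {n : ℕ} (i0 : Fin n) (a : ℂ) :
    ∑ i : Fin n, (if i = i0 then a else 0) = a := by simp

lemma sum_if_pair' {n : ℕ} {i0 i1 : Fin n} (h : i0 ≠ i1) (a b : ℂ) :
    ∑ i : Fin n, (if i = i0 then a else if i = i1 then b else 0) = a + b := by
  have key : ∀ i : Fin n, (if i = i0 then a else if i = i1 then b else 0)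
      = (if i = i0 then a else 0) + (if i = i1 then b else 0) := by
    intro i
    by_cases h0 : i = i0 <;> by_cases h1 : i = i1 <;> simp_all
  simp [key, Finset.sum_add_distrib]

/-- The key non-membership criterion: if there is a tuple `c` of complex numbers with
`∑ c = 0` and `∑ c² = 0` on which the quadratic form does not vanish, then the
polynomial `P` is not in the ideal generated by the elementary symmetric polynomials. -/
lemma not_mem_aux {p q : ℕ} (c : Fin p ⊕ Fin q → ℂ)
    (h1 : ∑ v, c v = 0) (h2 : ∑ v, (c v) ^ 2 = 0)
    (hV : (q : ℂ) * (∑ i : Fin p, c (Sum.inl i) ^ 2)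
        + (p : ℂ) * (∑ j : Fin q, c (Sum.inr j) ^ 2)
        - 2 * (∑ i : Fin p, c (Sum.inl i)) * (∑ j : Fin q, c (Sum.inr j)) ≠ 0) :
    (MvPolynomial.C (q : ℚ) * (∑ i : Fin p, MvPolynomial.X (Sum.inl i) ^ 2)
        + MvPolynomial.C (p : ℚ) * (∑ j : Fin q, MvPolynomial.X (Sum.inr j) ^ 2)
        - 2 * (∑ i : Fin p, MvPolynomial.X (Sum.inl i))
            * (∑ j : Fin q, MvPolynomial.X (Sum.inr j)))
      ∉ Ideal.span (Set.range fun k : Fin (p + q) =>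
        esymm (Fin p ⊕ Fin q) ℚ ((k : ℕ) + 1)) := by
  intro hmem
  set φ : MvPolynomial (Fin p ⊕ Fin q) ℚ →ₐ[ℚ] Polynomial ℂ :=
    MvPolynomial.aeval (fun v => Polynomial.C (c v) * Polynomial.X) with hφ
  have he1 : φ (esymm (Fin p ⊕ Fin q) ℚ 1) = 0 := by
    rw [esymm_one, map_sum]
    simp only [hφ, MvPolynomial.aeval_X]
    rw [← Finset.sum_mul, ← map_sum, h1, map_zero, zero_mul]
  have he2 : φ (esymm (Fin p ⊕ Fin q) ℚ 2) = 0 := by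
    have key := congrArg φ (two_mul_esymm_two (σ := Fin p ⊕ Fin q))
    rw [map_mul, map_sub, map_pow, he1] at key
    have hp2 : φ (psum (Fin p ⊕ Fin q) ℚ 2) = 0 := by
      rw [MvPolynomial.psum, map_sum]
      simp only [hφ, map_pow, MvPolynomial.aeval_X]
      simp only [mul_pow]
      simp only [← Polynomial.C_pow]
      rw [← Finset.sum_mul, ← map_sum, h2, map_zero, zero_mul]
    rw [hp2, map_ofNat] at key
    have key2 : (2 : Polynomial ℂ) * φ (esymm (Fin p ⊕ Fin q) ℚ 2) = 0 := by
      rw [key]; ring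
    rcases mul_eq_zero.mp key2 with h | h
    · exact absurd h two_ne_zero
    · exact h
  have hgen : ∀ k : Fin (p + q),
      φ (esymm (Fin p ⊕ Fin q) ℚ ((k : ℕ) + 1)) ∈
        Ideal.span {(Polynomial.X : Polynomial ℂ) ^ 3} := by
    intro k
    rcases (by omega : (k : ℕ) = 0 ∨ (k : ℕ) = 1 ∨ 2 ≤ (k : ℕ)) with h | h | h
    · rw [h, show (0 : ℕ) + 1 = 1 from rfl, he1]; exact Ideal.zero_mem _
    · rw [h, show (1 : ℕ) + 1 = 2 from rfl, he2]; exact Ideal.zero_mem _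
    · rw [MvPolynomial.esymm, map_sum]
      apply Ideal.sum_mem
      intro S hS
      have hcard : S.card = (k : ℕ) + 1 := (Finset.mem_powersetCard.mp hS).2
      rw [map_prod]
      simp only [hφ, MvPolynomial.aeval_X]
      rw [Finset.prod_mul_distrib, Finset.prod_const, hcard]
      refine Ideal.mul_mem_left _ _ ?_
      exact Ideal.mem_span_singleton.mpr (pow_dvd_pow _ (by omega))
  have himg : φ (MvPolynomial.C (q : ℚ) * (∑ i : Fin p, MvPolynomial.X (Sum.inl i) ^ 2)
        + MvPolynomial.C (p : ℚ) * (∑ j : Fin q, MvPolynomial.X (Sum.inr j) ^ 2)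
        - 2 * (∑ i : Fin p, MvPolynomial.X (Sum.inl i))
            * (∑ j : Fin q, MvPolynomial.X (Sum.inr j)))
      ∈ Ideal.span {(Polynomial.X : Polynomial ℂ) ^ 3} := by
    have hm := Ideal.mem_map_of_mem (φ.toRingHom) hmem
    rw [Ideal.map_span] at hm
    refine Ideal.span_le.mpr ?_ hm
    rintro _ ⟨_, ⟨k, rfl⟩, rfl⟩
    exact hgen k
  have hA : φ (∑ i : Fin p, MvPolynomial.X (Sum.inl i)) =
      Polynomial.C (∑ i : Fin p, c (Sum.inl i)) * Polynomial.X := by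
    rw [map_sum]; simp only [hφ, MvPolynomial.aeval_X]
    rw [← Finset.sum_mul, ← map_sum]
  have hB : φ (∑ j : Fin q, MvPolynomial.X (Sum.inr j)) =
      Polynomial.C (∑ j : Fin q, c (Sum.inr j)) * Polynomial.X := by
    rw [map_sum]; simp only [hφ, MvPolynomial.aeval_X]
    rw [← Finset.sum_mul, ← map_sum]
  have hA2 : φ (∑ i : Fin p, MvPolynomial.X (Sum.inl i) ^ 2) =
      Polynomial.C (∑ i : Fin p, c (Sum.inl i) ^ 2) * Polynomial.X ^ 2 := by
    rw [map_sum]; simp only [hφ, map_pow, MvPolynomial.aeval_X, mul_pow]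
    simp only [← Polynomial.C_pow]
    rw [← Finset.sum_mul, ← map_sum]
  have hB2 : φ (∑ j : Fin q, MvPolynomial.X (Sum.inr j) ^ 2) =
      Polynomial.C (∑ j : Fin q, c (Sum.inr j) ^ 2) * Polynomial.X ^ 2 := by
    rw [map_sum]; simp only [hφ, map_pow, MvPolynomial.aeval_X, mul_pow]
    simp only [← Polynomial.C_pow]
    rw [← Finset.sum_mul, ← map_sum]
  have hCq : φ (MvPolynomial.C (q : ℚ)) = Polynomial.C (q : ℂ) := by
    rw [hφ, MvPolynomial.aeval_C, Polynomial.algebraMap_apply]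
    norm_num
  have hCp : φ (MvPolynomial.C (p : ℚ)) = Polynomial.C (p : ℂ) := by
    rw [hφ, MvPolynomial.aeval_C, Polynomial.algebraMap_apply]
    norm_num
  have hPeq : φ (MvPolynomial.C (q : ℚ) * (∑ i : Fin p, MvPolynomial.X (Sum.inl i) ^ 2)
        + MvPolynomial.C (p : ℚ) * (∑ j : Fin q, MvPolynomial.X (Sum.inr j) ^ 2)
        - 2 * (∑ i : Fin p, MvPolynomial.X (Sum.inl i))
            * (∑ j : Fin q, MvPolynomial.X (Sum.inr j)))
      = Polynomial.C ((q : ℂ) * (∑ i : Fin p, c (Sum.inl i) ^ 2)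
          + (p : ℂ) * (∑ j : Fin q, c (Sum.inr j) ^ 2)
          - 2 * (∑ i : Fin p, c (Sum.inl i)) * (∑ j : Fin q, c (Sum.inr j)))
        * Polynomial.X ^ 2 := by
    simp only [map_sub, map_add, map_mul, map_ofNat, hA, hB, hA2, hB2, hCq, hCp]
    ring
  rw [hPeq] at himg
  obtain ⟨g, hg⟩ := Ideal.mem_span_singleton.mp himg
  apply hV
  have hc : ∀ V : ℂ, (Polynomial.C V * Polynomial.X ^ 2).coeff 2 = V := by
    intro V; rw [Polynomial.coeff_C_mul, Polynomial.coeff_X_pow]; simp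
  have hc2 : ((Polynomial.X : Polynomial ℂ) ^ 3 * g).coeff 2 = 0 := by
    rw [mul_comm, Polynomial.coeff_mul_X_pow']; simp
  exact (hc _).symm.trans (by rw [hg]; exact hc2)

/-- Case `q ≥ 2`, `p ≠ q + 2`: witness `(1; ω, ω², 0, …)`. -/
lemma case1 {p q : ℕ} (hp : 1 ≤ p) (hq2 : 2 ≤ q) (hne : p ≠ q + 2) :
    (MvPolynomial.C (q : ℚ) * (∑ i : Fin p, MvPolynomial.X (Sum.inl i) ^ 2)
        + MvPolynomial.C (p : ℚ) * (∑ j : Fin q, MvPolynomial.X (Sum.inr j) ^ 2)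
        - 2 * (∑ i : Fin p, MvPolynomial.X (Sum.inl i))
            * (∑ j : Fin q, MvPolynomial.X (Sum.inr j)))
      ∉ Ideal.span (Set.range fun k : Fin (p + q) =>
        esymm (Fin p ⊕ Fin q) ℚ ((k : ℕ) + 1)) := by
  set ω := omC with hωdef
  have hω : ω ^ 2 + ω + 1 = 0 := omC_rel
  set i0 : Fin p := ⟨0, by omega⟩
  set j0 : Fin q := ⟨0, by omega⟩
  set j1 : Fin q := ⟨1, by omega⟩
  have hj : j0 ≠ j1 := by simp [j0, j1, Fin.ext_iff]
  set c : Fin p ⊕ Fin q → ℂ :=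
    Sum.elim (fun i => if i = i0 then 1 else 0)
      (fun j => if j = j0 then ω else if j = j1 then ω ^ 2 else 0) with hc
  have sqA : ∀ i : Fin p, (c (Sum.inl i)) ^ 2 = (if i = i0 then 1 else 0) := by
    intro i; simp only [hc, Sum.elim_inl]; split_ifs <;> norm_num
  have sqB : ∀ j : Fin q, (c (Sum.inr j)) ^ 2
      = (if j = j0 then ω ^ 2 else if j = j1 then ω ^ 4 else 0) := by
    intro j; simp only [hc, Sum.elim_inr]; split_ifs <;> ring
  have hAy : ∑ i : Fin p, c (Sum.inl i) = 1 := by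
    simp only [hc, Sum.elim_inl]; exact sum_if_single' i0 1
  have hBz : ∑ j : Fin q, c (Sum.inr j) = ω + ω ^ 2 := by
    simp only [hc, Sum.elim_inr]; exact sum_if_pair' hj ω (ω ^ 2)
  have hAy2 : ∑ i : Fin p, (c (Sum.inl i)) ^ 2 = 1 := by
    simp only [sqA]; exact sum_if_single' i0 1
  have hBz2 : ∑ j : Fin q, (c (Sum.inr j)) ^ 2 = ω ^ 2 + ω ^ 4 := by
    simp only [sqB]; exact sum_if_pair' hj (ω ^ 2) (ω ^ 4)
  have h1 : ∑ v, c v = 0 := by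
    rw [Fintype.sum_sum_type, hAy, hBz]
    linear_combination hω
  have h2 : ∑ v, (c v) ^ 2 = 0 := by
    rw [Fintype.sum_sum_type, hAy2, hBz2]
    linear_combination (ω ^ 2 - ω + 1) * hω
  have hV : (q : ℂ) * (∑ i : Fin p, c (Sum.inl i) ^ 2)
      + (p : ℂ) * (∑ j : Fin q, c (Sum.inr j) ^ 2)
      - 2 * (∑ i : Fin p, c (Sum.inl i)) * (∑ j : Fin q, c (Sum.inr j)) ≠ 0 := by
    rw [hAy, hBz, hAy2, hBz2]
    intro h0
    have hpc : (q : ℂ) - p + 2 ≠ 0 := by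
      intro h
      apply hne
      have : ((p : ℂ)) = ((q + 2 : ℕ) : ℂ) := by push_cast; linear_combination -h
      exact_mod_cast this
    apply hpc
    linear_combination h0 - ((p : ℂ) * (ω ^ 2 - ω + 1) - 2) * hω
  exact not_mem_aux c h1 h2 hV

/-- Case `p ≥ 2`, `q ≠ p + 2`: witness `(ω, ω², 0, …; 1)`. -/
lemma case2 {p q : ℕ} (hp2 : 2 ≤ p) (hq : 1 ≤ q) (hne : q ≠ p + 2) :
    (MvPolynomial.C (q : ℚ) * (∑ i : Fin p, MvPolynomial.X (Sum.inl i) ^ 2)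
        + MvPolynomial.C (p : ℚ) * (∑ j : Fin q, MvPolynomial.X (Sum.inr j) ^ 2)
        - 2 * (∑ i : Fin p, MvPolynomial.X (Sum.inl i))
            * (∑ j : Fin q, MvPolynomial.X (Sum.inr j)))
      ∉ Ideal.span (Set.range fun k : Fin (p + q) =>
        esymm (Fin p ⊕ Fin q) ℚ ((k : ℕ) + 1)) := by
  set ω := omC with hωdef
  have hω : ω ^ 2 + ω + 1 = 0 := omC_rel
  set i0 : Fin p := ⟨0, by omega⟩
  set i1 : Fin p := ⟨1, by omega⟩
  set j0 : Fin q := ⟨0, by omega⟩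
  have hi : i0 ≠ i1 := by simp [i0, i1, Fin.ext_iff]
  set c : Fin p ⊕ Fin q → ℂ :=
    Sum.elim (fun i => if i = i0 then ω else if i = i1 then ω ^ 2 else 0)
      (fun j => if j = j0 then 1 else 0) with hc
  have sqA : ∀ i : Fin p, (c (Sum.inl i)) ^ 2
      = (if i = i0 then ω ^ 2 else if i = i1 then ω ^ 4 else 0) := by
    intro i; simp only [hc, Sum.elim_inl]; split_ifs <;> ring
  have sqB : ∀ j : Fin q, (c (Sum.inr j)) ^ 2 = (if j = j0 then 1 else 0) := by
    intro j; simp only [hc, Sum.elim_inr]; split_ifs <;> norm_num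
  have hAy : ∑ i : Fin p, c (Sum.inl i) = ω + ω ^ 2 := by
    simp only [hc, Sum.elim_inl]; exact sum_if_pair' hi ω (ω ^ 2)
  have hBz : ∑ j : Fin q, c (Sum.inr j) = 1 := by
    simp only [hc, Sum.elim_inr]; exact sum_if_single' j0 1
  have hAy2 : ∑ i : Fin p, (c (Sum.inl i)) ^ 2 = ω ^ 2 + ω ^ 4 := by
    simp only [sqA]; exact sum_if_pair' hi (ω ^ 2) (ω ^ 4)
  have hBz2 : ∑ j : Fin q, (c (Sum.inr j)) ^ 2 = 1 := by
    simp only [sqB]; exact sum_if_single' j0 1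
  have h1 : ∑ v, c v = 0 := by
    rw [Fintype.sum_sum_type, hAy, hBz]
    linear_combination hω
  have h2 : ∑ v, (c v) ^ 2 = 0 := by
    rw [Fintype.sum_sum_type, hAy2, hBz2]
    linear_combination (ω ^ 2 - ω + 1) * hω
  have hV : (q : ℂ) * (∑ i : Fin p, c (Sum.inl i) ^ 2)
      + (p : ℂ) * (∑ j : Fin q, c (Sum.inr j) ^ 2)
      - 2 * (∑ i : Fin p, c (Sum.inl i)) * (∑ j : Fin q, c (Sum.inr j)) ≠ 0 := by
    rw [hAy, hBz, hAy2, hBz2]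
    intro h0
    have hpc : (p : ℂ) - q + 2 ≠ 0 := by
      intro h
      apply hne
      have : ((q : ℂ)) = ((p + 2 : ℕ) : ℂ) := by push_cast; linear_combination -h
      exact_mod_cast this
    apply hpc
    linear_combination h0 - ((q : ℂ) * (ω ^ 2 - ω + 1) - 2) * hω
  exact not_mem_aux c h1 h2 hV

/-- In `ℚ[y₁,…,y_p,z₁,…,z_q]` (`p,q ≥ 1`), let `I` be the ideal generated by the
elementary symmetric polynomials `e₁,…,e_{p+q}` of all the variables and let
`P = q·Σyᵢ² + p·Σzⱼ² − 2·(Σyᵢ)(Σzⱼ)`. If `(p,q) ≠ (1,1)` then `P ∉ I`, whereas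
for `p = q = 1` (where `P = y² + z² − 2yz`) we have `P ∈ I`. -/
theorem SU_pq_first_pontryagin (p q : ℕ) (hp : 1 ≤ p) (hq : 1 ≤ q) :
    let P : MvPolynomial (Fin p ⊕ Fin q) ℚ :=
      C (q : ℚ) * (∑ i : Fin p, X (Sum.inl i) ^ 2)
        + C (p : ℚ) * (∑ j : Fin q, X (Sum.inr j) ^ 2)
        - 2 * (∑ i : Fin p, X (Sum.inl i)) * (∑ j : Fin q, X (Sum.inr j))
    let I : Ideal (MvPolynomial (Fin p ⊕ Fin q) ℚ) :=
      Ideal.span (Set.range fun k : Fin (p + q) =>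
        esymm (Fin p ⊕ Fin q) ℚ ((k : ℕ) + 1))
    ((p, q) ≠ (1, 1) → P ∉ I) ∧ ((p, q) = (1, 1) → P ∈ I) := by
  intro P I
  constructor
  · intro hne
    have hne' : ¬(p = 1 ∧ q = 1) := by
      rintro ⟨h1, h2⟩; exact hne (by simp [h1, h2])
    by_cases hcase : 2 ≤ q ∧ p ≠ q + 2
    · exact case1 hp hcase.1 hcase.2
    · have hq1 : q = 1 ∨ p = q + 2 := by
        by_cases h : 2 ≤ q
        · right
          rcases not_and_or.mp hcase with h' | h'
          · exact absurd h h'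
          · exact not_not.mp h'
        · left; omega
      have h2p : 2 ≤ p := by
        rcases hq1 with h | h
        · rcases Nat.eq_or_lt_of_le hp with h1 | h1
          · exact absurd ⟨h1.symm, h⟩ hne'
          · omega
        · omega
      have hqne : q ≠ p + 2 := by rcases hq1 with h | h <;> omega
      exact case2 h2p hq hqne
  · intro h
    rw [Prod.mk.injEq] at h
    obtain ⟨h1, h2⟩ := h
    subst h1; subst h2
    have e1mem : esymm (Fin 1 ⊕ Fin 1) ℚ 1 ∈ I :=
      Ideal.subset_span ⟨(0 : Fin (1 + 1)), by norm_num⟩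
    have e2mem : esymm (Fin 1 ⊕ Fin 1) ℚ 2 ∈ I :=
      Ideal.subset_span ⟨(1 : Fin (1 + 1)), by norm_num⟩
    have he1 : esymm (Fin 1 ⊕ Fin 1) ℚ 1
        = X (Sum.inl 0) + X (Sum.inr 0) := by
      rw [esymm_one, Fintype.sum_sum_type]
      simp
    have hcard : (Finset.univ : Finset (Fin 1 ⊕ Fin 1)).card = 2 := by simp
    have he2 : esymm (Fin 1 ⊕ Fin 1) ℚ 2
        = X (Sum.inl 0) * X (Sum.inr 0) := by
      rw [esymm, ← hcard, Finset.powersetCard_self, Finset.sum_singleton,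
        Fintype.prod_sum_type]
      simp
    have hP : P = esymm (Fin 1 ⊕ Fin 1) ℚ 1 * esymm (Fin 1 ⊕ Fin 1) ℚ 1
        - 4 * esymm (Fin 1 ⊕ Fin 1) ℚ 2 := by
      show (C ((1 : ℕ) : ℚ) * (∑ i : Fin 1, X (Sum.inl i) ^ 2)
        + C ((1 : ℕ) : ℚ) * (∑ j : Fin 1, X (Sum.inr j) ^ 2)
        - 2 * (∑ i : Fin 1, X (Sum.inl i)) * (∑ j : Fin 1, X (Sum.inr j))) = _
      rw [he1, he2]
      simp only [Fin.sum_univ_one, Nat.cast_one, map_one, one_mul]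
      ring
    rw [hP]
    exact Ideal.sub_mem _ (Ideal.mul_mem_left _ _ e1mem) (Ideal.mul_mem_left _ _ e2mem)
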